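/- Remark after Theorem 1: if epsilon >= 2/(lambda_1 + lambda_K), the coupled map lattice asymptotically synchronizes provided (epsilon * lambda_K - 1) * sup|f'| < 1. -/

import Mathlib

open Filter

lemma stmt17_spectral {V : Type*} [Fintype V] [DecidableEq V] [Nonempty V]
    (M : EuclideanSpace ℝ V →ₗ[ℝ] EuclideanSpace ℝ V) (hsym : M.IsSymmetric)
    (lam1 lamK ε : ℝ) (hlam1 : 0 < lam1) (hlamK : lam1 ≤ lamK)
    (hε : 2 / (lam1 + lamK) ≤ ε)
    (heig : ∀ (μ : ℝ) (a : EuclideanSpace ℝ V), a ≠ 0 → M a = μ • a →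
      μ = 0 ∨ (lam1 ≤ -μ ∧ -μ ≤ lamK)) (a : EuclideanSpace ℝ V) :
    -(inner ℝ (M (ε • M a + a)) (ε • M a + a) : ℝ) ≤
      (ε * lamK - 1)^2 * (-(inner ℝ a (M a) : ℝ)) := by
  have hsum : 0 < lam1 + lamK := by linarith
  have hεpos : 0 < ε := lt_of_lt_of_le (div_pos two_pos hsum) hε
  have hε2 : 2 ≤ ε * (lam1 + lamK) := by
    rw [div_le_iff₀ hsum] at hε; linarith
  have hK : 0 ≤ ε * lamK - 1 := by nlinarith
  have hn : Module.finrank ℝ (EuclideanSpace ℝ V) = Fintype.card V := finrank_euclideanSpace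
  set b := hsym.eigenvectorBasis hn with hb
  set μ := hsym.eigenvalues hn with hμ
  have hMb : ∀ i, M (b i) = μ i • b i := fun i => hsym.apply_eigenvectorBasis hn i
  have hbne : ∀ i, b i ≠ 0 := by
    intro i h
    have := b.orthonormal.1 i
    rw [h] at this; simp at this
  have hP : ∀ i, μ i = 0 ∨ (lam1 ≤ -(μ i) ∧ -(μ i) ≤ lamK) :=
    fun i => heig (μ i) (b i) (hbne i) (hMb i)
  have hQ : ∀ x y : EuclideanSpace ℝ V, (inner ℝ x y : ℝ) = ∑ i, b.repr x i * b.repr y i := by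
    intro x y
    rw [← b.repr.inner_map_map x y, PiLp.inner_apply]
    simp [RCLike.inner_apply]
    exact Finset.sum_congr rfl fun i _ => mul_comm _ _
  have hcoord : ∀ (x : EuclideanSpace ℝ V) i, b.repr (M x) i = μ i * b.repr x i := by
    intro x i
    rw [b.repr_apply_apply, b.repr_apply_apply, ← hsym (b i) x, hMb i,
      real_inner_smul_left]
  set c : Fin (Fintype.card V) → ℝ := fun i => b.repr a i with hc
  have hz : ∀ i, b.repr (ε • M a + a) i = (ε * μ i + 1) * c i := by
    intro i
    have h0 : b.repr (ε • M a + a) i = ε * b.repr (M a) i + b.repr a i := by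
      simp [map_add, map_smul]
    rw [h0, hcoord]; ring
  have e1 : (inner ℝ a (M a) : ℝ) = ∑ i, μ i * c i ^ 2 := by
    rw [hQ]
    refine Finset.sum_congr rfl fun i _ => ?_
    rw [hcoord]; ring
  have e2 : (inner ℝ (M (ε • M a + a)) (ε • M a + a) : ℝ)
      = ∑ i, μ i * ((ε * μ i + 1) * c i) ^ 2 := by
    rw [hQ]
    refine Finset.sum_congr rfl fun i _ => ?_
    rw [hcoord, hz]; ring
  rw [e1, e2, ← Finset.sum_neg_distrib, ← Finset.sum_neg_distrib, Finset.mul_sum]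
  refine Finset.sum_le_sum fun i _ => ?_
  rcases hP i with h0 | ⟨h1, h2⟩
  · simp [h0]
  · have hsq : (ε * μ i + 1) ^ 2 ≤ (ε * lamK - 1) ^ 2 := by
      apply sq_le_sq'
      · nlinarith
      · nlinarith
    have hν : 0 ≤ -(μ i) * c i ^ 2 := by nlinarith [sq_nonneg (c i)]
    nlinarith [mul_le_mul_of_nonneg_right hsq hν]

lemma stmt17_lip (f : ℝ → ℝ) (hf : Differentiable ℝ f) (C : ℝ) (hC : ∀ x, |deriv f x| ≤ C)
    (p q : ℝ) : (f p - f q)^2 ≤ C^2 * (p - q)^2 := by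
  have key : ∀ a b : ℝ, a < b → (f b - f a)^2 ≤ C^2 * (b - a)^2 := by
    intro a b hab
    obtain ⟨c, _, hc⟩ := exists_hasDerivAt_eq_slope f (deriv f) hab hf.continuous.continuousOn
      (fun x _ => (hf x).hasDerivAt)
    have hne : b - a ≠ 0 := sub_ne_zero.mpr hab.ne'
    rw [eq_div_iff hne] at hc
    calc (f b - f a)^2 = (deriv f c)^2 * (b-a)^2 := by rw [← hc]; ring
      _ ≤ C^2 * (b-a)^2 := by
        apply mul_le_mul_of_nonneg_right _ (sq_nonneg _)
        calc (deriv f c)^2 = |deriv f c|^2 := (sq_abs _).symm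
          _ ≤ C^2 := by nlinarith [abs_nonneg (deriv f c), hC c]
  rcases lt_trichotomy p q with h | h | h
  · calc (f p - f q)^2 = (f q - f p)^2 := by ring
      _ ≤ C^2*(q-p)^2 := key p q h
      _ = C^2*(p-q)^2 := by ring
  · simp [h]
  · exact key q p h

/-- Remark after Theorem 1: if `ε ≥ 2/(λ₁ + λ_K)`, the coupled map lattice asymptotically
synchronizes provided `(ελ_K - 1)·sup|f'| < 1`, i.e. `Φ(n) = ‖Λ u(·,n)‖² → 0`. -/
theorem stmt_17 {V : Type*} [Fintype V] [DecidableEq V] [Nonempty V]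
    (G : SimpleGraph V) [DecidableRel G.Adj] (hconn : G.Connected)
    (L : (V → ℝ) → (V → ℝ))
    (hL : ∀ v x, L v x = (1 / (G.degree x : ℝ)) * ∑ y ∈ G.neighborFinset x, v y - v x)
    (inn : (V → ℝ) → (V → ℝ) → ℝ)
    (hinn : ∀ u v, inn u v =
      (1 / (Fintype.card V : ℝ)) * ∑ x, (G.degree x : ℝ) * u x * v x)
    (Λ : (V → ℝ) →ₗ[ℝ] (V → ℝ))
    (hΛ : ∀ u v : V → ℝ, -(inn u (L v)) = inn (Λ u) (Λ v))
    (lam1 lamK : ℝ) (hlam1 : 0 < lam1) (hlamK : lam1 ≤ lamK)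
    (heig : ∀ (μ : ℝ) (v : V → ℝ), v ≠ 0 → (∀ x, -(L v x) = μ * v x) →
      μ = 0 ∨ (lam1 ≤ μ ∧ μ ≤ lamK))
    (f : ℝ → ℝ) (hf : Differentiable ℝ f)
    (C : ℝ) (hC : ∀ x, |deriv f x| ≤ C)
    (ε : ℝ) (hε : 2 / (lam1 + lamK) ≤ ε)
    (hstab : (ε * lamK - 1) * C < 1)
    (u : ℕ → V → ℝ)
    (hdyn : ∀ n x, u (n + 1) x = ε * L (fun y => f (u n y)) x + f (u n x))
    (Φ : ℕ → ℝ) (hΦ : ∀ n, Φ n = inn (Λ (u n)) (Λ (u n))) :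
    Tendsto Φ atTop (nhds 0) := by
  classical
  by_cases hdeg : ∀ x, 0 < G.degree x
  swap
  · -- degenerate case: some vertex has degree 0, so V is a single vertex and inn ≡ 0
    push_neg at hdeg
    obtain ⟨x0, hx0⟩ := hdeg
    have hx0' : G.degree x0 = 0 := Nat.eq_zero_of_not_pos (by omega)
    have hall : ∀ y, G.degree y = 0 := by
      intro y
      by_contra hy
      have hpos : 0 < G.degree y := Nat.pos_of_ne_zero hy
      -- x0 has a neighbor or y = x0 ... show y ≠ x0 leads to x0 having a neighbor
      obtain ⟨p⟩ := hconn.preconnected x0 y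
      cases p with
      | nil => omega
      | cons h _ =>
        have : 0 < G.degree x0 := by
          rw [← SimpleGraph.card_neighborFinset_eq_degree]
          exact Finset.card_pos.mpr ⟨_, (G.mem_neighborFinset _ _).mpr h⟩
        omega
    have hΦz : ∀ n, Φ n = 0 := by
      intro n
      rw [hΦ, hinn]
      simp [hall]
    rw [show Φ = fun _ => (0:ℝ) from funext hΦz]
    exact tendsto_const_nhds
  -- main case
  have hdegpos : ∀ x, (0:ℝ) < (G.degree x : ℝ) := fun x => by exact_mod_cast hdeg x
  have hcard : (0:ℝ) < (Fintype.card V : ℝ) := by exact_mod_cast Fintype.card_pos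
  have hcne : (Fintype.card V : ℝ) ≠ 0 := ne_of_gt hcard
  obtain ⟨s, hs0, hs2⟩ : ∃ s : V → ℝ, (∀ x, 0 < s x) ∧
      (∀ x, s x ^ 2 = (G.degree x : ℝ) / (Fintype.card V : ℝ)) :=
    ⟨fun x => Real.sqrt ((G.degree x : ℝ) / (Fintype.card V : ℝ)),
      fun x => Real.sqrt_pos.mpr (div_pos (hdegpos x) hcard),
      fun x => Real.sq_sqrt (le_of_lt (div_pos (hdegpos x) hcard))⟩
  have hsne : ∀ x, s x ≠ 0 := fun x => ne_of_gt (hs0 x)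
  -- the conjugated operator M on Euclidean space
  obtain ⟨M, hM⟩ : ∃ M : EuclideanSpace ℝ V →ₗ[ℝ] EuclideanSpace ℝ V,
      ∀ (a : EuclideanSpace ℝ V) (x : V), M a x = s x * L (fun y => a y / s y) x := by
    refine ⟨{ toFun := fun a => WithLp.toLp 2 (fun x => s x * L (fun y => a y / s y) x),
              map_add' := ?_, map_smul' := ?_ }, fun a x => rfl⟩
    · intro a b
      ext x
      simp only [hL, PiLp.add_apply, add_div, Finset.sum_add_distrib]
      ring
    · intro r a
      ext x
      simp only [hL, PiLp.smul_apply, smul_eq_mul, RingHom.id_apply, mul_div_assoc,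
        ← Finset.mul_sum]
      ring
  have hMdiv : ∀ (a : EuclideanSpace ℝ V) (x : V),
      M a x / s x = L (fun y => a y / s y) x := by
    intro a x
    rw [hM]
    exact mul_div_cancel_left₀ _ (hsne x)
  -- inner product transfer
  have hinner : ∀ a b : EuclideanSpace ℝ V,
      (inner ℝ a b : ℝ) = inn (fun x => a x / s x) (fun x => b x / s x) := by
    intro a b
    rw [PiLp.inner_apply, hinn, Finset.mul_sum]
    refine Finset.sum_congr rfl fun x _ => ?_
    have hdx : (G.degree x : ℝ) = (Fintype.card V : ℝ) * s x ^ 2 := by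
      rw [hs2 x]; field_simp
    rw [hdx]
    simp only [RCLike.inner_apply, conj_trivial]
    field_simp [hsne x]
  -- symmetry of the double sum over edges
  have hswap : ∀ F : V → V → ℝ,
      (∑ x, ∑ y ∈ G.neighborFinset x, F x y) = ∑ x, ∑ y ∈ G.neighborFinset x, F y x := by
    intro F
    simp only [SimpleGraph.neighborFinset_eq_filter, Finset.sum_filter]
    rw [Finset.sum_comm]
    refine Finset.sum_congr rfl fun x _ => Finset.sum_congr rfl fun y _ => ?_
    exact if_congr (G.adj_comm y x) rfl rfl
  -- formula for inn u (L v)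
  have hform : ∀ w₁ w₂ : V → ℝ, inn w₁ (L w₂) = (1 / (Fintype.card V : ℝ)) *
      ((∑ x, ∑ y ∈ G.neighborFinset x, w₁ x * w₂ y)
        - ∑ x, (G.degree x : ℝ) * w₁ x * w₂ x) := by
    intro w₁ w₂
    rw [hinn, ← Finset.sum_sub_distrib]
    refine congrArg (fun t => 1 / (Fintype.card V : ℝ) * t)
      (Finset.sum_congr rfl fun x _ => ?_)
    rw [hL, ← Finset.mul_sum]
    have hd : (G.degree x : ℝ) ≠ 0 := ne_of_gt (hdegpos x)
    field_simp
  have hinnsymm : ∀ w₁ w₂ : V → ℝ, inn w₁ w₂ = inn w₂ w₁ := by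
    intro w₁ w₂
    rw [hinn, hinn]
    exact congrArg _ (Finset.sum_congr rfl fun x _ => by ring)
  have hLsym : ∀ w₁ w₂ : V → ℝ, inn w₁ (L w₂) = inn w₂ (L w₁) := by
    intro w₁ w₂
    rw [hform, hform]
    have h1 : (∑ x, ∑ y ∈ G.neighborFinset x, w₁ x * w₂ y)
        = ∑ x, ∑ y ∈ G.neighborFinset x, w₁ y * w₂ x := hswap _
    have h2 : (∑ x, ∑ y ∈ G.neighborFinset x, w₁ y * w₂ x)
        = ∑ x, ∑ y ∈ G.neighborFinset x, w₂ x * w₁ y :=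
      Finset.sum_congr rfl fun x _ => Finset.sum_congr rfl fun y _ => mul_comm _ _
    have h3 : (∑ x, (G.degree x : ℝ) * w₁ x * w₂ x)
        = ∑ x, (G.degree x : ℝ) * w₂ x * w₁ x :=
      Finset.sum_congr rfl fun x _ => by ring
    rw [h1, h2, h3]
  -- Dirichlet form identity
  have hdir : ∀ w : V → ℝ, -(inn w (L w)) = (1 / (2 * (Fintype.card V : ℝ))) *
      ∑ x, ∑ y ∈ G.neighborFinset x, (w x - w y)^2 := by
    intro w
    have hB1 : (∑ x, ∑ y ∈ G.neighborFinset x, w x * w x)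
        = ∑ x, (G.degree x : ℝ) * w x * w x := by
      refine Finset.sum_congr rfl fun x _ => ?_
      rw [Finset.sum_const, SimpleGraph.card_neighborFinset_eq_degree, nsmul_eq_mul]
      ring
    have hB2 : (∑ x, ∑ y ∈ G.neighborFinset x, w y * w y)
        = ∑ x, (G.degree x : ℝ) * w x * w x := by
      have h := hswap (fun a b => w b * w b)
      exact h.trans hB1
    have hkey : (∑ x, ∑ y ∈ G.neighborFinset x, (w x - w y)^2)
        = ((∑ x, ∑ y ∈ G.neighborFinset x, w x * w x)
            - ∑ x, ∑ y ∈ G.neighborFinset x, (2 * (w x * w y)))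
          + ∑ x, ∑ y ∈ G.neighborFinset x, w y * w y := by
      simp only [← Finset.sum_add_distrib, ← Finset.sum_sub_distrib]
      exact Finset.sum_congr rfl fun x _ => Finset.sum_congr rfl fun y _ => by ring
    have h2A : (∑ x, ∑ y ∈ G.neighborFinset x, (2 * (w x * w y)))
        = 2 * ∑ x, ∑ y ∈ G.neighborFinset x, w x * w y := by
      simp only [← Finset.mul_sum]
    rw [hform, hkey, h2A, hB1, hB2]
    field_simp
    ring
  -- nonnegativity of Φ
  have hdirnn : ∀ w : V → ℝ, 0 ≤ -(inn w (L w)) := by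
    intro w
    rw [hdir]
    apply mul_nonneg
    · positivity
    · exact Finset.sum_nonneg fun x _ => Finset.sum_nonneg fun y _ => sq_nonneg _
  have hΦnn : ∀ n, 0 ≤ Φ n := by
    intro n
    rw [hΦ, ← hΛ]
    exact hdirnn (u n)
  -- symmetry of M
  have hsymM : M.IsSymmetric := by
    intro p q
    have h1 : (fun x => M p x / s x) = L (fun y => p y / s y) := funext (hMdiv p)
    have h2 : (fun x => M q x / s x) = L (fun y => q y / s y) := funext (hMdiv q)
    rw [hinner (M p) q, hinner p (M q)]
    calc inn (fun x => M p x / s x) (fun x => q x / s x)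
        = inn (L (fun y => p y / s y)) (fun x => q x / s x) := by rw [h1]
      _ = inn (fun x => q x / s x) (L (fun y => p y / s y)) := hinnsymm _ _
      _ = inn (fun y => p y / s y) (L (fun x => q x / s x)) := hLsym _ _
      _ = inn (fun x => p x / s x) (fun x => M q x / s x) := by rw [h2]
  -- eigenvalue transfer
  have heigM : ∀ (μ : ℝ) (a : EuclideanSpace ℝ V), a ≠ 0 → M a = μ • a →
      μ = 0 ∨ (lam1 ≤ -μ ∧ -μ ≤ lamK) := by
    intro μ a ha hMa
    have hv : (fun x => a x / s x) ≠ 0 := by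
      intro h
      apply ha
      ext x
      have h1 : a x / s x = 0 := congrFun h x
      have h2 : a x = a x / s x * s x := (div_mul_cancel₀ (a x) (hsne x)).symm
      rw [h2, h1, zero_mul]
      rfl
    have hLv : ∀ x, -(L (fun y => a y / s y) x) = (-μ) * ((fun y => a y / s y) x) := by
      intro x
      have h1 : s x * L (fun y => a y / s y) x = μ * a x := by
        have h0 : M a x = (μ • a) x := by rw [hMa]
        rw [hM] at h0
        rw [h0]
        simp [PiLp.smul_apply]
      have h2 : L (fun y => a y / s y) x = μ * (a x / s x) := by
        rw [← mul_div_assoc, eq_div_iff (hsne x)]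
        linear_combination h1
      rw [h2]
      ring
    rcases heig (-μ) (fun x => a x / s x) hv hLv with h | h
    · left; linarith
    · right; exact h
  -- Lipschitz bound transferred through the Dirichlet form
  have hC0 : 0 ≤ C := le_trans (abs_nonneg _) (hC 0)
  have hstep2 : ∀ v : V → ℝ,
      inn (Λ (fun x => f (v x))) (Λ (fun x => f (v x))) ≤ C^2 * inn (Λ v) (Λ v) := by
    intro v
    rw [← hΛ, ← hΛ, hdir, hdir, ← mul_assoc, mul_comm (C^2) _, mul_assoc]
    apply mul_le_mul_of_nonneg_left _ (by positivity)
    rw [Finset.mul_sum]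
    refine Finset.sum_le_sum fun x _ => ?_
    rw [Finset.mul_sum]
    exact Finset.sum_le_sum fun y _ => stmt17_lip f hf C hC _ _
  -- key one-step estimate via the spectral lemma
  have key : ∀ w : V → ℝ,
      -(inn (fun x => ε * L w x + w x) (L (fun x => ε * L w x + w x)))
        ≤ (ε * lamK - 1)^2 * inn (Λ w) (Λ w) := by
    intro w
    set a : EuclideanSpace ℝ V := WithLp.toLp 2 (fun x => s x * w x) with hadef
    have hasw : (fun y => a y / s y) = w := by
      funext y
      exact mul_div_cancel_left₀ _ (hsne y)
    have hMa : ∀ x, M a x = s x * L w x := by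
      intro x
      rw [hM, hasw]
    have hzx : ∀ x, (ε • M a + a) x = s x * (ε * L w x + w x) := by
      intro x
      have h0 : (ε • M a + a) x = ε * M a x + a x := by
        simp [PiLp.add_apply, PiLp.smul_apply, smul_eq_mul]
      have ha : a x = s x * w x := rfl
      rw [h0, hMa, ha]
      ring
    have hzdiv : ∀ x, (ε • M a + a) x / s x = ε * L w x + w x := by
      intro x
      rw [hzx x]
      exact mul_div_cancel_left₀ _ (hsne x)
    have hzfun : (fun x => (ε • M a + a) x / s x) = (fun x => ε * L w x + w x) :=
      funext hzdiv
    have hMzfun : (fun x => M (ε • M a + a) x / s x)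
        = L (fun x => ε * L w x + w x) := by
      funext x
      rw [hMdiv]
      exact congrFun (congrArg L hzfun) x
    have hinnMz : (inner ℝ (M (ε • M a + a)) (ε • M a + a) : ℝ)
        = inn (L (fun x => ε * L w x + w x)) (fun x => ε * L w x + w x) := by
      rw [hinner, hMzfun, hzfun]
    have hinnaMa : (inner ℝ a (M a) : ℝ) = inn w (L w) := by
      rw [hinner]
      have hMafun : (fun x => M a x / s x) = L w := by
        funext x
        rw [hMdiv]
        exact congrFun (congrArg L hasw) x
      rw [hasw, hMafun]
    have hspec := stmt17_spectral M hsymM lam1 lamK ε hlam1 hlamK hε heigM a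
    rw [hinnMz, hinnaMa] at hspec
    calc -(inn (fun x => ε * L w x + w x) (L (fun x => ε * L w x + w x)))
        = -(inn (L (fun x => ε * L w x + w x)) (fun x => ε * L w x + w x)) := by
          rw [hinnsymm]
      _ ≤ (ε * lamK - 1)^2 * (-(inn w (L w))) := hspec
      _ = (ε * lamK - 1)^2 * inn (Λ w) (Λ w) := by rw [hΛ]
  -- recurrence for Φ
  have hsum : 0 < lam1 + lamK := by linarith
  have hεpos : 0 < ε := lt_of_lt_of_le (div_pos two_pos hsum) hε
  have hε2 : 2 ≤ ε * (lam1 + lamK) := by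
    rw [div_le_iff₀ hsum] at hε; linarith
  have hK : 0 ≤ ε * lamK - 1 := by nlinarith
  have hrec : ∀ n, Φ (n+1) ≤ ((ε * lamK - 1) * C)^2 * Φ n := by
    intro n
    have hu' : u (n+1) = fun x => ε * L (fun y => f (u n y)) x + f (u n x) :=
      funext (hdyn n)
    have h1 : Φ (n+1) ≤ (ε * lamK - 1)^2 *
        inn (Λ (fun y => f (u n y))) (Λ (fun y => f (u n y))) := by
      rw [hΦ, ← hΛ, hu']
      exact key (fun y => f (u n y))
    have h2 : inn (Λ (fun y => f (u n y))) (Λ (fun y => f (u n y))) ≤ C^2 * Φ n := by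
      rw [hΦ]
      exact hstep2 (u n)
    calc Φ (n+1) ≤ (ε * lamK - 1)^2 *
          inn (Λ (fun y => f (u n y))) (Λ (fun y => f (u n y))) := h1
      _ ≤ (ε * lamK - 1)^2 * (C^2 * Φ n) :=
          mul_le_mul_of_nonneg_left h2 (sq_nonneg _)
      _ = ((ε * lamK - 1) * C)^2 * Φ n := by ring
  -- geometric decay
  have hq0 : 0 ≤ ((ε * lamK - 1) * C)^2 := sq_nonneg _
  have hq1 : ((ε * lamK - 1) * C)^2 < 1 := by nlinarith [mul_nonneg hK hC0]
  have hbound : ∀ n, Φ n ≤ Φ 0 * (((ε * lamK - 1) * C)^2)^n := by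
    intro n
    induction n with
    | zero => simp
    | succ n ih =>
      calc Φ (n+1) ≤ ((ε * lamK - 1) * C)^2 * Φ n := hrec n
        _ ≤ ((ε * lamK - 1) * C)^2 * (Φ 0 * (((ε * lamK - 1) * C)^2)^n) :=
            mul_le_mul_of_nonneg_left ih hq0
        _ = Φ 0 * (((ε * lamK - 1) * C)^2)^(n+1) := by ring
  exact squeeze_zero hΦnn hbound
    (by simpa using (tendsto_pow_atTop_nhds_zero_of_lt_one hq0 hq1).const_mul (Φ 0))
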